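/- For each c_e ∈ (0, c_*), the function q ↦ ρ(q²)·(A(c_e) − A(q)) is strictly decreasing on (0, c_e), tends to +∞ as q → 0⁺, and equals 0 at q = c_e; hence there is a unique root c_l ∈ (0, c_e) of the equation ρ(c_l²)·(A(c_e) − A(c_l)) = 1. -/

import Mathlib

open Set Filter

/-- Bernoulli density as a function of `t = q²`. -/
noncomputable def rho (γ t : ℝ) : ℝ := (1 - (γ - 1) / 2 * t) ^ ((1 : ℝ) / (γ - 1))

/-- Critical (sonic) speed. -/
noncomputable def cstar (γ : ℝ) : ℝ := Real.sqrt (2 / (γ + 1))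

/-- `A(q) = ∫_{c_*}^q (ρ(s²) + 2s²ρ'(s²))/(s ρ²(s²)) ds`. -/
noncomputable def Afun (γ q : ℝ) : ℝ :=
  ∫ s in (cstar γ)..q,
    (rho γ (s ^ 2) + 2 * s ^ 2 * deriv (rho γ) (s ^ 2)) / (s * (rho γ (s ^ 2)) ^ 2)

/-- For `c_e ∈ (0, c_*)`, the function `q ↦ ρ(q²)(A(c_e) − A(q))` is strictly
decreasing on `(0, c_e)`, tends to `+∞` as `q → 0⁺`, vanishes at `c_e`, and hence
has a unique root `c_l ∈ (0, c_e)` of `ρ(c_l²)(A(c_e) − A(c_l)) = 1`. -/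

noncomputable def Ffun (γ s : ℝ) : ℝ :=
  (1 - (γ + 1) / 2 * s ^ 2) * (1 - (γ - 1) / 2 * s ^ 2) ^ (-(1 / (γ - 1)) - 1) / s

lemma rho_pos {γ t : ℝ} (ht : (γ - 1) / 2 * t < 1) : 0 < rho γ t :=
  Real.rpow_pos_of_pos (by linarith) _

lemma hasDerivAt_rho {γ : ℝ} (hγ : 1 < γ) {t : ℝ} (ht : (γ - 1) / 2 * t < 1) :
    HasDerivAt (rho γ) (-(1 / 2) * (1 - (γ - 1) / 2 * t) ^ ((1 : ℝ) / (γ - 1) - 1)) t := by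
  have hu : 0 < 1 - (γ - 1) / 2 * t := by linarith
  have h1 : HasDerivAt (fun t : ℝ => 1 - (γ - 1) / 2 * t) (-((γ - 1) / 2)) t := by
    simpa using ((hasDerivAt_id t).const_mul ((γ - 1) / 2)).const_sub 1
  have h2 := h1.rpow_const (p := (1 : ℝ) / (γ - 1)) (Or.inl hu.ne')
  convert h2 using 1
  have : γ - 1 ≠ 0 := ne_of_gt (by linarith)
  · rfl
  · rw [show -((γ - 1) / 2) * (1 / (γ - 1)) = -(1 / 2 : ℝ) by
      have : γ - 1 ≠ 0 := ne_of_gt (by linarith)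
      field_simp]

lemma deriv_rho {γ : ℝ} (hγ : 1 < γ) {t : ℝ} (ht : (γ - 1) / 2 * t < 1) :
    deriv (rho γ) t = -(1 / 2) * (1 - (γ - 1) / 2 * t) ^ ((1 : ℝ) / (γ - 1) - 1) :=
  (hasDerivAt_rho hγ ht).deriv

lemma deriv_rho_neg {γ : ℝ} (hγ : 1 < γ) {t : ℝ} (ht : (γ - 1) / 2 * t < 1) :
    deriv (rho γ) t < 0 := by
  rw [deriv_rho hγ ht]
  have : (0:ℝ) < (1 - (γ - 1) / 2 * t) ^ ((1 : ℝ) / (γ - 1) - 1) :=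
    Real.rpow_pos_of_pos (by linarith) _
  nlinarith

lemma integrand_eq {γ : ℝ} (hγ : 1 < γ) {s : ℝ} (hs : 0 < s) (hs2 : (γ - 1) / 2 * s ^ 2 < 1) :
    (rho γ (s ^ 2) + 2 * s ^ 2 * deriv (rho γ) (s ^ 2)) / (s * (rho γ (s ^ 2)) ^ 2)
      = Ffun γ s := by
  have hu : 0 < 1 - (γ - 1) / 2 * s ^ 2 := by linarith
  rw [deriv_rho hγ hs2]
  set u := 1 - (γ - 1) / 2 * s ^ 2 with hudef
  set κ := (1 : ℝ) / (γ - 1) with hκ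
  have hrho : rho γ (s ^ 2) = u ^ κ := rfl
  rw [hrho]
  have hX : u - s ^ 2 = 1 - (γ + 1) / 2 * s ^ 2 := by rw [hudef]; ring
  have e1 : u ^ κ = u ^ (κ - 1) * u := by
    rw [← Real.rpow_add_one hu.ne' (κ - 1)]; ring_nf
  have hup : (0:ℝ) < u ^ κ := Real.rpow_pos_of_pos hu _
  have hum : (0:ℝ) < u ^ (κ - 1) := Real.rpow_pos_of_pos hu _
  have e2 : u ^ (-κ - 1) = u ^ (κ - 1) / (u ^ κ * u ^ κ) := by
    rw [eq_div_iff (by positivity), ← Real.rpow_add hu, ← Real.rpow_add hu]; ring_nf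
  have hFf : Ffun γ s = (1 - (γ + 1) / 2 * s ^ 2) * u ^ (-κ - 1) / s := rfl
  rw [hFf, ← hX, e2, e1]
  clear_value u κ
  have hu' := hu.ne'
  field_simp
  ring

lemma sq_lt_of_mem {γ : ℝ} (hγ : 1 < γ) {s : ℝ}
    (hs : s ∈ Ioo (0:ℝ) (Real.sqrt (2 / (γ - 1)))) : (γ - 1) / 2 * s ^ 2 < 1 := by
  have h1 : s ^ 2 < 2 / (γ - 1) := (Real.lt_sqrt hs.1.le).mp hs.2
  have h2 : 0 < γ - 1 := by linarith
  calc (γ - 1) / 2 * s ^ 2 < (γ - 1) / 2 * (2 / (γ - 1)) := by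
        apply mul_lt_mul_of_pos_left h1 (by positivity)
    _ = 1 := by field_simp

lemma cstar_mem {γ : ℝ} (hγ : 1 < γ) : cstar γ ∈ Ioo (0:ℝ) (Real.sqrt (2 / (γ - 1))) := by
  constructor
  · exact Real.sqrt_pos.mpr (by positivity)
  · exact Real.sqrt_lt_sqrt (by positivity) (by
      apply div_lt_div_of_pos_left <;> linarith)

lemma contOn_Ffun {γ : ℝ} (hγ : 1 < γ) :
    ContinuousOn (Ffun γ) (Ioo (0:ℝ) (Real.sqrt (2 / (γ - 1)))) := by
  apply ContinuousOn.div
  · apply ContinuousOn.mul (by fun_prop)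
    apply ContinuousOn.rpow_const (by fun_prop)
    intro s hs
    exact Or.inl (ne_of_gt (by linarith [sq_lt_of_mem hγ hs]))
  · exact continuousOn_id
  · exact fun s hs => hs.1.ne'

lemma intervalIntegrable_Ffun {γ : ℝ} (hγ : 1 < γ) {q1 q2 : ℝ}
    (h1 : q1 ∈ Ioo (0:ℝ) (Real.sqrt (2 / (γ - 1))))
    (h2 : q2 ∈ Ioo (0:ℝ) (Real.sqrt (2 / (γ - 1)))) :
    IntervalIntegrable (Ffun γ) MeasureTheory.volume q1 q2 :=
  ((contOn_Ffun hγ).mono ((ordConnected_Ioo).uIcc_subset h1 h2)).intervalIntegrable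

lemma Afun_eq {γ : ℝ} (hγ : 1 < γ) {q : ℝ}
    (hq : q ∈ Ioo (0:ℝ) (Real.sqrt (2 / (γ - 1)))) :
    Afun γ q = ∫ s in (cstar γ)..q, Ffun γ s := by
  apply intervalIntegral.integral_congr
  intro s hs
  have hsD : s ∈ Ioo (0:ℝ) (Real.sqrt (2 / (γ - 1))) :=
    (ordConnected_Ioo).uIcc_subset (cstar_mem hγ) hq hs
  exact integrand_eq hγ hsD.1 (sq_lt_of_mem hγ hsD)

lemma hasDerivAt_Afun {γ : ℝ} (hγ : 1 < γ) {q : ℝ}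
    (hq : q ∈ Ioo (0:ℝ) (Real.sqrt (2 / (γ - 1)))) :
    HasDerivAt (Afun γ) (Ffun γ q) q := by
  have hA : HasDerivAt (fun x => ∫ s in (cstar γ)..x, Ffun γ s) (Ffun γ q) q :=
    intervalIntegral.integral_hasDerivAt_right
      (intervalIntegrable_Ffun hγ (cstar_mem hγ) hq)
      ((contOn_Ffun hγ).stronglyMeasurableAtFilter isOpen_Ioo q hq)
      ((contOn_Ffun hγ).continuousAt (isOpen_Ioo.mem_nhds hq))
  apply hA.congr_of_eventuallyEq
  filter_upwards [isOpen_Ioo.mem_nhds hq] with x hx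
  exact Afun_eq hγ hx

lemma Ffun_pos {γ : ℝ} (hγ : 1 < γ) {s : ℝ} (hs : s ∈ Ioo (0:ℝ) (cstar γ)) :
    0 < Ffun γ s := by
  have hsD : s ∈ Ioo (0:ℝ) (Real.sqrt (2 / (γ - 1))) := ⟨hs.1, hs.2.trans (cstar_mem hγ).2⟩
  have h1 : s ^ 2 < 2 / (γ + 1) := by
    have := (Real.lt_sqrt hs.1.le).mp hs.2
    simpa [cstar] using this
  have h2 : 0 < 1 - (γ + 1) / 2 * s ^ 2 := by
    have hγ1 : (0:ℝ) < γ + 1 := by linarith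
    have h4 := mul_lt_mul_of_pos_left h1 (by positivity : (0:ℝ) < (γ + 1) / 2)
    have h5 : (γ + 1) / 2 * (2 / (γ + 1)) = 1 := by field_simp
    linarith
  have h3 : (0:ℝ) < (1 - (γ - 1) / 2 * s ^ 2) ^ (-(1 / (γ - 1)) - 1) :=
    Real.rpow_pos_of_pos (by linarith [sq_lt_of_mem hγ hsD]) _
  exact div_pos (mul_pos h2 h3) hs.1

lemma Afun_sub {γ : ℝ} (hγ : 1 < γ) {q1 q2 : ℝ}
    (h1 : q1 ∈ Ioo (0:ℝ) (Real.sqrt (2 / (γ - 1))))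
    (h2 : q2 ∈ Ioo (0:ℝ) (Real.sqrt (2 / (γ - 1)))) :
    Afun γ q2 - Afun γ q1 = ∫ s in q1..q2, Ffun γ s := by
  rw [Afun_eq hγ h2, Afun_eq hγ h1]
  exact intervalIntegral.integral_interval_sub_left
    (intervalIntegrable_Ffun hγ (cstar_mem hγ) h2) (intervalIntegrable_Ffun hγ (cstar_mem hγ) h1)

lemma Afun_sub_pos {γ : ℝ} (hγ : 1 < γ) {q1 q2 : ℝ} (h0 : 0 < q1) (h12 : q1 < q2)
    (h2c : q2 < cstar γ) : 0 < Afun γ q2 - Afun γ q1 := by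
  have hb := (cstar_mem hγ).2
  have h1D : q1 ∈ Ioo (0:ℝ) (Real.sqrt (2 / (γ - 1))) := ⟨h0, by linarith [h12.trans h2c]⟩
  have h2D : q2 ∈ Ioo (0:ℝ) (Real.sqrt (2 / (γ - 1))) := ⟨h0.trans h12, by linarith⟩
  rw [Afun_sub hγ h1D h2D]
  apply intervalIntegral.intervalIntegral_pos_of_pos_on
    (intervalIntegrable_Ffun hγ h1D h2D) _ h12
  intro x hx
  exact Ffun_pos hγ ⟨h0.trans hx.1, hx.2.trans h2c⟩

lemma hasDerivAt_G {γ : ℝ} (hγ : 1 < γ) (c_e : ℝ) {q : ℝ} (hq : q ∈ Ioo (0:ℝ) (cstar γ)) :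
    HasDerivAt (fun q => rho γ (q ^ 2) * (Afun γ c_e - Afun γ q))
      (-(1 / 2) * (1 - (γ - 1) / 2 * q ^ 2) ^ ((1:ℝ) / (γ - 1) - 1) * (2 * q)
        * (Afun γ c_e - Afun γ q) + rho γ (q ^ 2) * (-(Ffun γ q))) q := by
  have hb := (cstar_mem hγ).2
  have hqD : q ∈ Ioo (0:ℝ) (Real.sqrt (2 / (γ - 1))) := ⟨hq.1, hq.2.trans hb⟩
  have hsq : (γ - 1) / 2 * q ^ 2 < 1 := sq_lt_of_mem hγ hqD
  have h1 : HasDerivAt (fun x : ℝ => rho γ (x ^ 2))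
      (-(1 / 2) * (1 - (γ - 1) / 2 * q ^ 2) ^ ((1:ℝ) / (γ - 1) - 1) * (2 * q)) q := by
    have hu : 0 < 1 - (γ - 1) / 2 * q ^ 2 := by linarith
    have hp : HasDerivAt (fun x : ℝ => x ^ 2) (2 * q) q := by
      simpa using hasDerivAt_pow 2 q
    have hin : HasDerivAt (fun x : ℝ => 1 - (γ - 1) / 2 * x ^ 2) (-((γ - 1) / 2 * (2 * q))) q := by
      simpa using (hp.const_mul ((γ - 1) / 2)).const_sub 1
    have h2 := hin.rpow_const (p := (1:ℝ) / (γ - 1)) (Or.inl hu.ne')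
    have hne : γ - 1 ≠ 0 := ne_of_gt (by linarith)
    convert h2 using 1
    · rfl
    rw [show -((γ - 1) / 2 * (2 * q)) * (1 / (γ - 1)) = -(1 / 2 : ℝ) * (2 * q) by field_simp]
    ring
  have h2 : HasDerivAt (fun x => Afun γ c_e - Afun γ x) (-(Ffun γ q)) q :=
    (hasDerivAt_Afun hγ hqD).const_sub _
  exact h1.mul h2

/-- For `c_e ∈ (0, c_*)`, the function `q ↦ ρ(q²)(A(c_e) − A(q))` is strictly
decreasing on `(0, c_e)`, tends to `+∞` as `q → 0⁺`, vanishes at `c_e`, and hence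
has a unique root `c_l ∈ (0, c_e)` of `ρ(c_l²)(A(c_e) − A(c_l)) = 1`. -/
theorem stmt_6 (γ : ℝ) (hγ : 1 < γ) (c_e : ℝ) (hce : c_e ∈ Ioo (0 : ℝ) (cstar γ)) :
    StrictAntiOn (fun q => rho γ (q ^ 2) * (Afun γ c_e - Afun γ q)) (Ioo (0 : ℝ) c_e) ∧
    Tendsto (fun q => rho γ (q ^ 2) * (Afun γ c_e - Afun γ q)) (nhdsWithin 0 (Ioi 0)) atTop ∧
    rho γ (c_e ^ 2) * (Afun γ c_e - Afun γ c_e) = 0 ∧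
    (∃! c_l : ℝ, c_l ∈ Ioo (0 : ℝ) c_e ∧ rho γ (c_l ^ 2) * (Afun γ c_e - Afun γ c_l) = 1) := by
  obtain ⟨hce0, hcec⟩ := hce
  have hb := (cstar_mem hγ).2
  have hcs0 := (cstar_mem hγ).1
  set G : ℝ → ℝ := fun q => rho γ (q ^ 2) * (Afun γ c_e - Afun γ q) with hGdef
  have hDneg : ∀ q ∈ Ioo (0:ℝ) c_e,
      -(1 / 2) * (1 - (γ - 1) / 2 * q ^ 2) ^ ((1:ℝ) / (γ - 1) - 1) * (2 * q)
        * (Afun γ c_e - Afun γ q) + rho γ (q ^ 2) * (-(Ffun γ q)) < 0 := by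
    intro q hq
    have hqc : q ∈ Ioo (0:ℝ) (cstar γ) := ⟨hq.1, hq.2.trans hcec⟩
    have hqD : q ∈ Ioo (0:ℝ) (Real.sqrt (2 / (γ - 1))) := ⟨hq.1, hqc.2.trans hb⟩
    have hu : (0:ℝ) < (1 - (γ - 1) / 2 * q ^ 2) ^ ((1:ℝ) / (γ - 1) - 1) :=
      Real.rpow_pos_of_pos (by linarith [sq_lt_of_mem hγ hqD]) _
    have hApos := Afun_sub_pos hγ hq.1 hq.2 hcec
    have hrpos : 0 < rho γ (q ^ 2) := rho_pos (sq_lt_of_mem hγ hqD)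
    have hFpos := Ffun_pos hγ hqc
    have t1 : -(1 / 2) * (1 - (γ - 1) / 2 * q ^ 2) ^ ((1:ℝ) / (γ - 1) - 1) * (2 * q)
        * (Afun γ c_e - Afun γ q) < 0 := by
      apply mul_neg_of_neg_of_pos _ hApos
      nlinarith [mul_pos hu (by linarith [hq.1] : (0:ℝ) < 2 * q)]
    have t2 : rho γ (q ^ 2) * (-(Ffun γ q)) < 0 :=
      mul_neg_of_pos_of_neg hrpos (by linarith)
    linarith
  have part1 : StrictAntiOn G (Ioo (0:ℝ) c_e) := by
    apply strictAntiOn_of_deriv_neg (convex_Ioo _ _)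
    · intro q hq
      exact (hasDerivAt_G hγ c_e ⟨hq.1, hq.2.trans hcec⟩).continuousAt.continuousWithinAt
    · intro q hq
      rw [interior_Ioo] at hq
      rw [(hasDerivAt_G hγ c_e ⟨hq.1, hq.2.trans hcec⟩).deriv]
      exact hDneg q hq
  have part3 : G c_e = 0 := by simp [hGdef]
  set r0 : ℝ := (2 / (γ + 1)) ^ ((1:ℝ) / (γ - 1)) with hr0def
  have hr0 : 0 < r0 := Real.rpow_pos_of_pos (by positivity) _
  have hrho_lb : ∀ q ∈ Ioo (0:ℝ) (cstar γ), r0 ≤ rho γ (q ^ 2) := by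
    intro q hq
    have hq2 : q ^ 2 < 2 / (γ + 1) := by
      have := (Real.lt_sqrt hq.1.le).mp hq.2
      simpa [cstar] using this
    apply Real.rpow_le_rpow (by positivity)
    · have e : (γ - 1) / 2 * (2 / (γ + 1)) = 1 - 2 / (γ + 1) := by
        field_simp
        ring
      nlinarith [mul_lt_mul_of_pos_left hq2 (by linarith : (0:ℝ) < (γ - 1) / 2)]
    · have : (0:ℝ) < γ - 1 := by linarith
      positivity
  set δ : ℝ := min c_e (Real.sqrt (1 / (γ + 1))) with hδdef
  have hδ0 : 0 < δ := lt_min hce0 (Real.sqrt_pos.mpr (by positivity))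
  have hδce : δ ≤ c_e := min_le_left _ _
  have hδD : δ ∈ Ioo (0:ℝ) (Real.sqrt (2 / (γ - 1))) :=
    ⟨hδ0, lt_of_le_of_lt hδce (hcec.trans hb)⟩
  have hceD : c_e ∈ Ioo (0:ℝ) (Real.sqrt (2 / (γ - 1))) := ⟨hce0, hcec.trans hb⟩
  have key : ∀ q ∈ Ioo (0:ℝ) δ, r0 * (1 / 2 * (Real.log δ - Real.log q)) ≤ G q := by
    intro q hq
    have hqD : q ∈ Ioo (0:ℝ) (Real.sqrt (2 / (γ - 1))) := ⟨hq.1, hq.2.trans_le hδD.2.le⟩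
    have h1 : 0 ≤ Afun γ c_e - Afun γ δ := by
      rw [Afun_sub hγ hδD hceD]
      apply intervalIntegral.integral_nonneg hδce
      intro s hs
      exact (Ffun_pos hγ ⟨hδ0.trans_le hs.1, lt_of_le_of_lt hs.2 hcec⟩).le
    have h2 : (∫ s in q..δ, 1 / 2 * s⁻¹) ≤ Afun γ δ - Afun γ q := by
      rw [Afun_sub hγ hqD hδD]
      apply intervalIntegral.integral_mono_on hq.2.le
      · apply ContinuousOn.intervalIntegrable
        apply ContinuousOn.mul continuousOn_const
        apply ContinuousOn.inv₀ continuousOn_id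
        intro s hs
        rw [uIcc_of_le hq.2.le] at hs
        exact ne_of_gt (hq.1.trans_le hs.1)
      · exact intervalIntegrable_Ffun hγ hqD hδD
      · intro s hs
        have hs0 : 0 < s := lt_of_lt_of_le hq.1 hs.1
        have hsδ : s ≤ δ := hs.2
        have hsq : s ^ 2 ≤ 1 / (γ + 1) := by
          have h3 : s ≤ Real.sqrt (1 / (γ + 1)) := hsδ.trans (min_le_right _ _)
          have h4 := Real.sq_sqrt (by positivity : (0:ℝ) ≤ 1 / (γ + 1))
          nlinarith [Real.sqrt_nonneg (1 / (γ + 1))]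
        have hX : (1:ℝ) / 2 ≤ 1 - (γ + 1) / 2 * s ^ 2 := by
          have hp : (0:ℝ) < γ + 1 := by linarith
          have h6 := mul_le_mul_of_nonneg_left hsq (by positivity : (0:ℝ) ≤ (γ + 1) / 2)
          have h5 : (γ + 1) / 2 * (1 / (γ + 1)) = 1 / 2 := by field_simp
          linarith
        have hsD : s ∈ Ioo (0:ℝ) (Real.sqrt (2 / (γ - 1))) := ⟨hs0, hsδ.trans_lt hδD.2⟩
        have hu0 : 0 < 1 - (γ - 1) / 2 * s ^ 2 := by linarith [sq_lt_of_mem hγ hsD]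
        have hu1 : 1 - (γ - 1) / 2 * s ^ 2 ≤ 1 := by nlinarith [sq_nonneg s]
        have hP : (1:ℝ) ≤ (1 - (γ - 1) / 2 * s ^ 2) ^ (-(1 / (γ - 1)) - 1) := by
          apply Real.one_le_rpow_of_pos_of_le_one_of_nonpos hu0 hu1
          have h7 : (0:ℝ) < γ - 1 := by linarith
          have : (0:ℝ) < 1 / (γ - 1) := by positivity
          linarith
        have hNP : (1:ℝ) / 2 * 1 ≤ (1 - (γ + 1) / 2 * s ^ 2) *
            (1 - (γ - 1) / 2 * s ^ 2) ^ (-(1 / (γ - 1)) - 1) :=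
          mul_le_mul hX hP (by norm_num) (by linarith)
        have hF : Ffun γ s = (1 - (γ + 1) / 2 * s ^ 2) *
            (1 - (γ - 1) / 2 * s ^ 2) ^ (-(1 / (γ - 1)) - 1) / s := rfl
        rw [hF, div_eq_mul_inv]
        exact mul_le_mul_of_nonneg_right (by linarith) (inv_nonneg.mpr hs0.le)
    have h3 : (∫ s in q..δ, 1 / 2 * s⁻¹) = 1 / 2 * (Real.log δ - Real.log q) := by
      rw [intervalIntegral.integral_const_mul, integral_inv_of_pos hq.1 hδ0,
        Real.log_div hδ0.ne' hq.1.ne']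
    have hlogpos : 0 ≤ Real.log δ - Real.log q := by
      have := Real.log_lt_log hq.1 hq.2
      linarith
    have hAq : 1 / 2 * (Real.log δ - Real.log q) ≤ Afun γ c_e - Afun γ q := by
      rw [h3] at h2; linarith
    have hqc : q ∈ Ioo (0:ℝ) (cstar γ) := ⟨hq.1, (hq.2.trans_le hδce).trans hcec⟩
    calc r0 * (1 / 2 * (Real.log δ - Real.log q))
        ≤ rho γ (q ^ 2) * (1 / 2 * (Real.log δ - Real.log q)) :=
          mul_le_mul_of_nonneg_right (hrho_lb q hqc) (by linarith)
      _ ≤ rho γ (q ^ 2) * (Afun γ c_e - Afun γ q) :=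
          mul_le_mul_of_nonneg_left hAq (rho_pos (sq_lt_of_mem hγ hqD)).le
  have hlogT : Tendsto (fun q : ℝ => r0 * (1 / 2 * (Real.log δ - Real.log q)))
      (nhdsWithin 0 (Ioi 0)) atTop := by
    apply Tendsto.const_mul_atTop hr0
    apply Tendsto.const_mul_atTop (by norm_num : (0:ℝ) < 1 / 2)
    have h := tendsto_neg_atBot_atTop.comp Real.tendsto_log_nhdsGT_zero
    have := tendsto_atTop_add_const_left _ (Real.log δ) h
    simpa [sub_eq_add_neg, Function.comp] using this
  have part2 : Tendsto G (nhdsWithin 0 (Ioi 0)) atTop := by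
    apply tendsto_atTop_mono' _ _ hlogT
    filter_upwards [Ioo_mem_nhdsGT_of_mem (⟨le_refl (0:ℝ), hδ0⟩ : (0:ℝ) ∈ Ico (0:ℝ) δ)]
      with q hq
    exact key q hq
  refine ⟨part1, part2, part3, ?_⟩
  have hev : ∀ᶠ q in nhdsWithin (0:ℝ) (Ioi 0), 1 < G q := part2.eventually_gt_atTop 1
  have hmem : Ioo (0:ℝ) c_e ∈ nhdsWithin (0:ℝ) (Ioi 0) :=
    Ioo_mem_nhdsGT_of_mem ⟨le_refl (0:ℝ), hce0⟩
  obtain ⟨q0, hq0G, hq0mem⟩ := (hev.and (eventually_of_mem hmem fun x hx => hx)).exists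
  have hcont : ContinuousOn G (Icc q0 c_e) := fun x hx =>
    (hasDerivAt_G hγ c_e ⟨lt_of_lt_of_le hq0mem.1 hx.1,
      lt_of_le_of_lt hx.2 hcec⟩).continuousAt.continuousWithinAt
  have hsub : Icc (G c_e) (G q0) ⊆ G '' Icc q0 c_e :=
    intermediate_value_Icc' hq0mem.2.le hcont
  have h1mem : (1:ℝ) ∈ Icc (G c_e) (G q0) := by
    rw [part3]; exact ⟨by norm_num, hq0G.le⟩
  obtain ⟨c_l, hclmem, hclval⟩ := hsub h1mem
  have hclIoo : c_l ∈ Ioo (0:ℝ) c_e := by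
    refine ⟨lt_of_lt_of_le hq0mem.1 hclmem.1, ?_⟩
    rcases lt_or_eq_of_le hclmem.2 with h | h
    · exact h
    · exfalso; rw [h, part3] at hclval; norm_num at hclval
  refine ⟨c_l, ⟨hclIoo, hclval⟩, ?_⟩
  rintro y ⟨hymem, hyval⟩
  exact part1.injOn hymem hclIoo (hyval.trans hclval.symm)
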